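/- Let n ≥ 6 be an integer and x ≥ 0 a real number. Then the fourth central moment of the second-order modified Baskakov–Durrmeyer operator satisfies V̂_{n,2}((t−x)⁴; x) = (1/((n−2)(n−3)(n−4)(n−5)))·[n²(−12x² − 24x³ − 12x⁴) + n(−156x − 816x² − 1320x³ − 660x⁴) − 144 − 1284x − 4068x² − 5568x³ − 2784x⁴], where the operator is applied to the function t ↦ (t − x)⁴. -/

import Mathlib

open MeasureTheory Filter Topology Set

/-- Baskakov basis function `p_{n,k}(x) = C(n+k-1, k) x^k / (1+x)^{n+k}`. -/
noncomputable def bask (n k : ℕ) (x : ℝ) : ℝ :=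
  (Nat.choose (n + k - 1) k : ℝ) * x ^ k / (1 + x) ^ (n + k)

/-- Second-order modified basis
`p^2_{n,k}(x) = (3/2 + 2x - n x(1+x)) p_{n+2,k}(x) + 2n x(1+x) p_{n+2,k-1}(x)
  + (-1/2 - 2x - n x(1+x)) p_{n+2,k-2}(x)`, with `p_{n+2,j} = 0` for `j < 0`. -/
noncomputable def p2 (n k : ℕ) (x : ℝ) : ℝ :=
  (3 / 2 + 2 * x - (n : ℝ) * x * (1 + x)) * bask (n + 2) k x
    + 2 * (n : ℝ) * x * (1 + x) * (if k = 0 then 0 else bask (n + 2) (k - 1) x)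
    + (-(1 / 2) - 2 * x - (n : ℝ) * x * (1 + x)) * (if k < 2 then 0 else bask (n + 2) (k - 2) x)

/-- Second-order modified Baskakov–Durrmeyer operator. -/
noncomputable def V2 (n : ℕ) (f : ℝ → ℝ) (x : ℝ) : ℝ :=
  ((n : ℝ) - 1) * ∑' k : ℕ, p2 n k x * ∫ t in Set.Ioi (0 : ℝ), bask n k t * f t

lemma tendsto_inv_one_add_pow (d : ℕ) (hd : 1 ≤ d) :
    Tendsto (fun t : ℝ => ((1 + t) ^ d)⁻¹) atTop (𝓝 0) := by
  apply Tendsto.inv_tendsto_atTop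
  exact (tendsto_pow_atTop (by omega)).comp (tendsto_atTop_add_const_left _ 1 tendsto_id)

lemma hasDerivAt_aux (m : ℕ) (t : ℝ) (ht : (0:ℝ) ≤ t) :
    HasDerivAt (fun s : ℝ => ((1 + s) ^ (m + 1))⁻¹)
      (-((m:ℝ) + 1) * ((1 + t) ^ (m + 2))⁻¹) t := by
  have h1t : (0:ℝ) < 1 + t := by linarith
  have h2 : HasDerivAt (fun s : ℝ => (1 + s) ^ (m + 1))
      (((m:ℝ) + 1) * (1 + t) ^ m) t := by
    have := (hasDerivAt_pow (m + 1) (1 + t)).comp t ((hasDerivAt_id t).const_add 1)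
    simp at this; exact this
  have h3 := h2.inv (by positivity)
  refine h3.congr_deriv ?_
  rw [div_eq_mul_inv]
  rw [show (1 + t) ^ (m + 2) = (1 + t) ^ (m+1) * (1+t) from by ring,
      show ((1 + t) ^ (m + 1)) ^ 2 = ((1+t)^(m+1) * (1+t)) * (1+t)^m from by ring]
  rw [mul_inv, mul_inv]
  field_simp

lemma J0_integrable (b : ℕ) :
    IntegrableOn (fun t : ℝ => ((1 + t) ^ (b + 2))⁻¹) (Ioi 0) := by
  have := integrableOn_Ioi_deriv_of_nonneg'
    (g := fun t : ℝ => -((b:ℝ) + 1)⁻¹ * ((1 + t) ^ (b + 1))⁻¹)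
    (g' := fun t : ℝ => ((1 + t) ^ (b + 2))⁻¹) (a := 0) (l := 0)
    ?_ ?_ ?_
  · exact this
  · intro t ht
    have := (hasDerivAt_aux b t ht).const_mul (-((b:ℝ) + 1)⁻¹)
    refine this.congr_deriv ?_
    have : ((b:ℝ) + 1) ≠ 0 := by positivity
    field_simp
  · intro t ht
    have h1t : (0:ℝ) < 1 + t := by simp at ht; linarith
    positivity
  · have := (tendsto_inv_one_add_pow (b+1) (by omega)).const_mul (-((b:ℝ) + 1)⁻¹)
    simpa using this

lemma J_integrable (a b : ℕ) :
    IntegrableOn (fun t : ℝ => t ^ a * ((1 + t) ^ (a + b + 2))⁻¹) (Ioi 0) := by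
  apply Integrable.mono (J0_integrable b)
  · apply ContinuousOn.aestronglyMeasurable _ measurableSet_Ioi
    apply ContinuousOn.mul (continuousOn_pow a)
    apply ContinuousOn.inv₀ (by fun_prop)
    intro t ht
    have : (0:ℝ) < 1 + t := by simp at ht; linarith
    positivity
  · filter_upwards [ae_restrict_mem measurableSet_Ioi] with t ht
    simp only [mem_Ioi] at ht
    have h1t : (0:ℝ) < 1 + t := by linarith
    rw [Real.norm_eq_abs, Real.norm_eq_abs, abs_of_nonneg (by positivity),
      abs_of_nonneg (by positivity)]
    have h1 : t ^ a ≤ (1 + t) ^ a := pow_le_pow_left₀ (le_of_lt ht) (by linarith) a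
    calc t ^ a * ((1 + t) ^ (a + b + 2))⁻¹
        ≤ (1 + t) ^ a * ((1 + t) ^ (a + b + 2))⁻¹ := by
          apply mul_le_mul_of_nonneg_right h1 (by positivity)
      _ = ((1 + t) ^ (b + 2))⁻¹ := by
          rw [show a + b + 2 = a + (b + 2) from by ring, pow_add, mul_inv]
          rw [← mul_assoc, mul_inv_cancel₀ (by positivity), one_mul]

lemma J_value (a b : ℕ) :
    ∫ t in Ioi (0:ℝ), t ^ a * ((1 + t) ^ (a + b + 2))⁻¹
      = (a.factorial : ℝ) * (b.factorial : ℝ) / ((a + b + 1).factorial : ℝ) := by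
  induction a with
  | zero =>
      have h0 : ∫ t in Ioi (0:ℝ), ((1 + t) ^ (b + 2))⁻¹ = ((b:ℝ) + 1)⁻¹ := by
        have := integral_Ioi_of_hasDerivAt_of_nonneg'
          (g := fun t : ℝ => -((b:ℝ) + 1)⁻¹ * ((1 + t) ^ (b + 1))⁻¹)
          (g' := fun t : ℝ => ((1 + t) ^ (b + 2))⁻¹) (a := 0) (l := 0)
          ?_ ?_ ?_
        · rw [this]; norm_num
        · intro t ht
          have := (hasDerivAt_aux b t ht).const_mul (-((b:ℝ) + 1)⁻¹)
          refine this.congr_deriv ?_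
          have : ((b:ℝ) + 1) ≠ 0 := by positivity
          field_simp
        · intro t ht
          have h1t : (0:ℝ) < 1 + t := by simp at ht; linarith
          positivity
        · have := (tendsto_inv_one_add_pow (b+1) (by omega)).const_mul (-((b:ℝ) + 1)⁻¹)
          simpa using this
      simp only [pow_zero, one_mul, zero_add]
      rw [h0]
      rw [Nat.factorial_zero, Nat.factorial_succ]
      push_cast
      have : ((b:ℝ) + 1) ≠ 0 := by positivity
      have : (b.factorial : ℝ) ≠ 0 := by positivity
      field_simp
  | succ a ih =>
      -- F t = -(a+b+2)⁻¹ * (t^(a+1) * ((1+t)^(a+b+2))⁻¹)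
      set c : ℝ := ((a:ℝ) + (b:ℝ) + 2) with hc
      have hcpos : (0:ℝ) < c := by positivity
      have key : ∫ t in Ioi (0:ℝ),
          (t ^ (a+1) * ((1 + t) ^ (a + 1 + b + 2))⁻¹
            - (((a:ℝ)+1)/c) * (t ^ a * ((1 + t) ^ (a + b + 2))⁻¹)) = 0 := by
        have := integral_Ioi_of_hasDerivAt_of_tendsto'
          (f := fun t : ℝ => -c⁻¹ * (t ^ (a+1) * ((1 + t) ^ (a + b + 2))⁻¹))
          (f' := fun t : ℝ => t ^ (a+1) * ((1 + t) ^ (a + 1 + b + 2))⁻¹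
            - (((a:ℝ)+1)/c) * (t ^ a * ((1 + t) ^ (a + b + 2))⁻¹))
          (a := 0) (m := 0) ?_ ?_ ?_
        · rw [this]; norm_num
        · intro t ht
          simp only [mem_Ici] at ht
          have h1t : (0:ℝ) < 1 + t := by linarith
          have h1 : HasDerivAt (fun s : ℝ => s ^ (a+1)) (((a:ℝ)+1) * t ^ a) t := by
            simpa using hasDerivAt_pow (a+1) t
          have h2 := hasDerivAt_aux (a + b + 1) t ht
          have h3 := (h1.mul h2).const_mul (-c⁻¹)
          have e1 : a + b + 1 + 1 = a + b + 2 := by ring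
          have e2 : a + b + 1 + 2 = a + 1 + b + 2 := by ring
          rw [e1, e2] at h3
          refine h3.congr_deriv ?_
          have hne : ((1:ℝ) + t) ≠ 0 := by positivity
          have h1ne : ((1:ℝ)+t) ^ (a+b+2) ≠ 0 := by positivity
          have h2ne : ((1:ℝ)+t) ^ (a+1+b+2) ≠ 0 := by positivity
          have hcne : c ≠ 0 := ne_of_gt hcpos
          rw [hc]; push_cast
          field_simp
          ring
        · apply Integrable.sub (J_integrable (a+1) b)
          exact (J_integrable a b).const_mul _
        · have hb : Tendsto (fun t : ℝ => ((1 + t) ^ (b + 1))⁻¹) atTop (𝓝 0) :=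
            tendsto_inv_one_add_pow (b+1) (by omega)
          have hsq : Tendsto (fun t : ℝ => t ^ (a+1) * ((1 + t) ^ (a + b + 2))⁻¹)
              atTop (𝓝 0) := by
            apply tendsto_of_tendsto_of_tendsto_of_le_of_le' tendsto_const_nhds hb
            · filter_upwards [Ioi_mem_atTop (0:ℝ)] with t ht
              have h1t : (0:ℝ) < 1 + t := by simp at ht; linarith
              simp only [mem_Ioi] at ht
              exact mul_nonneg (pow_nonneg ht.le _) (by positivity)
            · filter_upwards [Ioi_mem_atTop (0:ℝ)] with t ht
              simp only [mem_Ioi] at ht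
              have h1t : (0:ℝ) < 1 + t := by linarith
              have h1 : t ^ (a+1) ≤ (1 + t) ^ (a+1) :=
                pow_le_pow_left₀ (le_of_lt ht) (by linarith) _
              calc t ^ (a+1) * ((1 + t) ^ (a + b + 2))⁻¹
                  ≤ (1 + t) ^ (a+1) * ((1 + t) ^ (a + b + 2))⁻¹ :=
                    mul_le_mul_of_nonneg_right h1 (by positivity)
                _ = ((1 + t) ^ (b + 1))⁻¹ := by
                    rw [show a + b + 2 = (a + 1) + (b + 1) from by ring,
                      pow_add (1+t) (a+1) (b+1), mul_inv,
                      ← mul_assoc, mul_inv_cancel₀ (by positivity), one_mul]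
          have := hsq.const_mul (-c⁻¹)
          simpa using this
      rw [integral_sub (J_integrable (a+1) b) ((J_integrable a b).const_mul _)] at key
      rw [integral_const_mul, ih] at key
      have h2 : ∫ t in Ioi (0:ℝ), t ^ (a+1) * ((1 + t) ^ (a + 1 + b + 2))⁻¹
          = (((a:ℝ)+1)/c) * ((a.factorial : ℝ) * (b.factorial : ℝ) / ((a + b + 1).factorial : ℝ)) := by
        linarith
      rw [h2]
      have e3 : a + 1 + b + 1 = (a + b + 1) + 1 := by ring
      rw [e3, Nat.factorial_succ (a+b+1), Nat.factorial_succ a]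
      have hf1 : ((a+b+1).factorial : ℝ) ≠ 0 := by positivity
      have hcne : c ≠ 0 := ne_of_gt hcpos
      push_cast
      rw [hc]
      field_simp
      ring

set_option maxHeartbeats 2000000 in
lemma bask_integral (p k : ℕ) (x : ℝ) :
    ∫ t in Ioi (0:ℝ), bask (p+6) k t * (t - x)^4 =
      x^4/((p:ℝ)+5) - 4*x^3*((k:ℝ)+1)/(((p:ℝ)+5)*((p:ℝ)+4))
      + 6*x^2*(((k:ℝ)+1)*((k:ℝ)+2))/(((p:ℝ)+5)*((p:ℝ)+4)*((p:ℝ)+3))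
      - 4*x*(((k:ℝ)+1)*((k:ℝ)+2)*((k:ℝ)+3))/(((p:ℝ)+5)*((p:ℝ)+4)*((p:ℝ)+3)*((p:ℝ)+2))
      + (((k:ℝ)+1)*((k:ℝ)+2)*((k:ℝ)+3)*((k:ℝ)+4))
          /(((p:ℝ)+5)*((p:ℝ)+4)*((p:ℝ)+3)*((p:ℝ)+2)*((p:ℝ)+1)) := by
  set C : ℝ := (Nat.choose (k+p+5) k : ℝ) with hCdef
  have hfun : (fun t : ℝ => bask (p+6) k t * (t - x)^4) =
      (fun t : ℝ =>
        C * (t^(k+4) * ((1+t)^((k+4)+p+2))⁻¹)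
        - (4*x*C) * (t^(k+3) * ((1+t)^((k+3)+(p+1)+2))⁻¹)
        + (6*x^2*C) * (t^(k+2) * ((1+t)^((k+2)+(p+2)+2))⁻¹)
        - (4*x^3*C) * (t^(k+1) * ((1+t)^((k+1)+(p+3)+2))⁻¹)
        + (x^4*C) * (t^k * ((1+t)^(k+(p+4)+2))⁻¹)) := by
    funext t
    rw [bask, show p+6+k-1 = k+p+5 from by omega]
    rw [show p+6+k = (k+4)+p+2 from by omega]
    rw [show (k+3)+(p+1)+2 = (k+4)+p+2 from by omega]
    rw [show (k+2)+(p+2)+2 = (k+4)+p+2 from by omega]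
    rw [show (k+1)+(p+3)+2 = (k+4)+p+2 from by omega]
    rw [show k+(p+4)+2 = (k+4)+p+2 from by omega]
    rw [div_eq_mul_inv]
    ring
  rw [hfun]
  have i4 := (J_integrable (k+4) p).const_mul C
  have i3 := (J_integrable (k+3) (p+1)).const_mul (4*x*C)
  have i2 := (J_integrable (k+2) (p+2)).const_mul (6*x^2*C)
  have i1 := (J_integrable (k+1) (p+3)).const_mul (4*x^3*C)
  have i0 := (J_integrable k (p+4)).const_mul (x^4*C)
  have i43 : Integrable (fun t : ℝ => C * (t^(k+4) * ((1+t)^((k+4)+p+2))⁻¹)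
      - (4*x*C) * (t^(k+3) * ((1+t)^((k+3)+(p+1)+2))⁻¹)) (volume.restrict (Ioi 0)) := i4.sub i3
  have i432 : Integrable (fun t : ℝ => C * (t^(k+4) * ((1+t)^((k+4)+p+2))⁻¹)
      - (4*x*C) * (t^(k+3) * ((1+t)^((k+3)+(p+1)+2))⁻¹)
      + (6*x^2*C) * (t^(k+2) * ((1+t)^((k+2)+(p+2)+2))⁻¹)) (volume.restrict (Ioi 0)) := i43.add i2
  have i4321 : Integrable (fun t : ℝ => C * (t^(k+4) * ((1+t)^((k+4)+p+2))⁻¹)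
      - (4*x*C) * (t^(k+3) * ((1+t)^((k+3)+(p+1)+2))⁻¹)
      + (6*x^2*C) * (t^(k+2) * ((1+t)^((k+2)+(p+2)+2))⁻¹)
      - (4*x^3*C) * (t^(k+1) * ((1+t)^((k+1)+(p+3)+2))⁻¹)) (volume.restrict (Ioi 0)) := i432.sub i1
  rw [integral_add i4321 i0,
      integral_sub i432 i1,
      integral_add i43 i2,
      integral_sub i4 i3,
      integral_const_mul, integral_const_mul, integral_const_mul, integral_const_mul,
      integral_const_mul,
      J_value (k+4) p, J_value (k+3) (p+1), J_value (k+2) (p+2), J_value (k+1) (p+3),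
      J_value k (p+4)]
  rw [show k+4+p+1 = k+p+5 from by omega, show k+3+(p+1)+1 = k+p+5 from by omega,
      show k+2+(p+2)+1 = k+p+5 from by omega, show k+1+(p+3)+1 = k+p+5 from by omega,
      show k+(p+4)+1 = k+p+5 from by omega]
  have hk4 : ((k+4).factorial : ℝ) = ((k:ℝ)+4)*((k:ℝ)+3)*((k:ℝ)+2)*((k:ℝ)+1)*(k.factorial : ℝ) := by
    rw [show k+4 = (k+3)+1 from by omega, Nat.factorial_succ,
        show k+3 = (k+2)+1 from by omega, Nat.factorial_succ,
        show k+2 = (k+1)+1 from by omega, Nat.factorial_succ, Nat.factorial_succ]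
    push_cast; ring
  have hk3 : ((k+3).factorial : ℝ) = ((k:ℝ)+3)*((k:ℝ)+2)*((k:ℝ)+1)*(k.factorial : ℝ) := by
    rw [show k+3 = (k+2)+1 from by omega, Nat.factorial_succ,
        show k+2 = (k+1)+1 from by omega, Nat.factorial_succ, Nat.factorial_succ]
    push_cast; ring
  have hk2 : ((k+2).factorial : ℝ) = ((k:ℝ)+2)*((k:ℝ)+1)*(k.factorial : ℝ) := by
    rw [show k+2 = (k+1)+1 from by omega, Nat.factorial_succ, Nat.factorial_succ]
    push_cast; ring
  have hk1 : ((k+1).factorial : ℝ) = ((k:ℝ)+1)*(k.factorial : ℝ) := by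
    rw [Nat.factorial_succ]; push_cast; ring
  have hp5 : (((p+4)+1).factorial : ℝ)
      = ((p:ℝ)+5)*((p:ℝ)+4)*((p:ℝ)+3)*((p:ℝ)+2)*((p:ℝ)+1)*(p.factorial : ℝ) := by
    rw [Nat.factorial_succ, show p+4 = (p+3)+1 from by omega, Nat.factorial_succ,
        show p+3 = (p+2)+1 from by omega, Nat.factorial_succ,
        show p+2 = (p+1)+1 from by omega, Nat.factorial_succ, Nat.factorial_succ]
    push_cast; ring
  have hp4 : ((p+4).factorial : ℝ) = ((p:ℝ)+4)*((p:ℝ)+3)*((p:ℝ)+2)*((p:ℝ)+1)*(p.factorial : ℝ) := by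
    rw [show p+4 = (p+3)+1 from by omega, Nat.factorial_succ,
        show p+3 = (p+2)+1 from by omega, Nat.factorial_succ,
        show p+2 = (p+1)+1 from by omega, Nat.factorial_succ, Nat.factorial_succ]
    push_cast; ring
  have hp3 : ((p+3).factorial : ℝ) = ((p:ℝ)+3)*((p:ℝ)+2)*((p:ℝ)+1)*(p.factorial : ℝ) := by
    rw [show p+3 = (p+2)+1 from by omega, Nat.factorial_succ,
        show p+2 = (p+1)+1 from by omega, Nat.factorial_succ, Nat.factorial_succ]
    push_cast; ring
  have hp2 : ((p+2).factorial : ℝ) = ((p:ℝ)+2)*((p:ℝ)+1)*(p.factorial : ℝ) := by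
    rw [show p+2 = (p+1)+1 from by omega, Nat.factorial_succ, Nat.factorial_succ]
    push_cast; ring
  have hp1 : ((p+1).factorial : ℝ) = ((p:ℝ)+1)*(p.factorial : ℝ) := by
    rw [Nat.factorial_succ]; push_cast; ring
  have hC : C * (k.factorial : ℝ) * (((p+4)+1).factorial : ℝ) = ((k+p+5).factorial : ℝ) := by
    rw [hCdef]
    rw [show (p+4)+1 = (k+p+5) - k from by omega]
    exact_mod_cast congrArg (fun m : ℕ => (m : ℝ))
      (Nat.choose_mul_factorial_mul_factorial (show k ≤ k+p+5 from by omega))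
  have hkf : (k.factorial : ℝ) ≠ 0 := by positivity
  have hpf : (p.factorial : ℝ) ≠ 0 := by positivity
  have hkp5 : ((k+p+5).factorial : ℝ) ≠ 0 := by positivity
  have hCval : C = ((k+p+5).factorial : ℝ) / ((k.factorial : ℝ) * (((p+4)+1).factorial : ℝ)) := by
    rw [← hC]; field_simp [hp5]
  rw [hCval, hk4, hk3, hk2, hk1, hp5, hp4, hp3, hp2, hp1]
  have h1 : ((p:ℝ)+1) ≠ 0 := by positivity
  have h2 : ((p:ℝ)+2) ≠ 0 := by positivity
  have h3 : ((p:ℝ)+3) ≠ 0 := by positivity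
  have h4 : ((p:ℝ)+4) ≠ 0 := by positivity
  have h5 : ((p:ℝ)+5) ≠ 0 := by positivity
  field_simp
  ring

lemma hasSum_bask (N : ℕ) (hN : 1 ≤ N) (x : ℝ) (hx : 0 ≤ x) :
    HasSum (fun k => bask N k x) 1 := by
  have h1x : (0:ℝ) < 1 + x := by linarith
  set q : ℝ := x / (1 + x) with hq
  have hq0 : 0 ≤ q := by positivity
  have hq1 : q < 1 := by
    rw [hq, div_lt_one h1x]; linarith
  have hnorm : ‖q‖ < 1 := by rw [Real.norm_eq_abs, abs_of_nonneg hq0]; exact hq1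
  have h := (hasSum_choose_mul_geometric_of_norm_lt_one (N-1) hnorm).mul_left
    (((1+x) ^ N)⁻¹)
  have hfun : ∀ k : ℕ, ((1+x) ^ N)⁻¹ * ((((k + (N-1)).choose (N-1)) : ℝ) * q ^ k)
      = bask N k x := by
    intro k
    rw [bask]
    have hch : (k + (N-1)).choose (N-1) = (N + k - 1).choose k := by
      have h1 : N + k - 1 = k + (N - 1) := by omega
      rw [h1, ← Nat.choose_symm (Nat.le_add_right k (N-1))]
      congr 1
      omega
    rw [hch, hq, div_pow, pow_add]
    field_simp
  have hval : ((1+x) ^ N)⁻¹ * (1 / (1 - q) ^ (N - 1 + 1)) = 1 := by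
    have h1 : 1 - q = (1+x)⁻¹ := by
      rw [hq]; field_simp; ring
    rw [h1, show N - 1 + 1 = N from by omega, inv_pow]
    field_simp
  rw [funext hfun] at h
  rwa [hval] at h

lemma bask_mul_succ (N k : ℕ) (x : ℝ) :
    bask N (k+1) x * ((k:ℝ)+1) = (N:ℝ) * x * bask (N+1) k x := by
  rw [bask, bask]
  rw [show N + (k+1) - 1 = N + k from by omega, show N + 1 + k - 1 = N + k from by omega]
  have hch : ((N+k).choose (k+1) : ℝ) * ((k:ℝ)+1) = ((N+k).choose k : ℝ) * (N:ℝ) := by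
    have := Nat.choose_succ_right_eq (N+k) k
    have h2 : N + k - k = N := by omega
    rw [h2] at this
    exact_mod_cast congrArg (fun m : ℕ => (m:ℝ)) this
  rw [div_eq_mul_inv, div_eq_mul_inv,
    show N + (k+1) = N + 1 + k from by omega]
  calc ((N+k).choose (k+1) : ℝ) * x ^ (k+1) * ((1+x) ^ (N+1+k))⁻¹ * ((k:ℝ)+1)
      = (((N+k).choose (k+1) : ℝ) * ((k:ℝ)+1)) * x ^ (k+1) * ((1+x) ^ (N+1+k))⁻¹ := by ring
    _ = (((N+k).choose k : ℝ) * (N:ℝ)) * x ^ (k+1) * ((1+x) ^ (N+1+k))⁻¹ := by rw [hch]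
    _ = (N:ℝ) * x * (((N+k).choose k : ℝ) * x ^ k * ((1+x) ^ (N+1+k))⁻¹) := by ring

lemma hasSum_bask_fall (r : ℕ) : ∀ (N : ℕ), 1 ≤ N → ∀ (x : ℝ), 0 ≤ x →
    HasSum (fun k => bask N k x * ∏ i ∈ Finset.range r, ((k:ℝ) - i))
      ((∏ i ∈ Finset.range r, ((N:ℝ) + i)) * x ^ r) := by
  induction r with
  | zero =>
      intro N hN x hx
      simpa using hasSum_bask N hN x hx
  | succ r ih =>
      intro N hN x hx
      have IH := (ih (N+1) (by omega) x hx).mul_left ((N:ℝ) * x)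
      have hshift : ∀ k : ℕ,
          bask N (k+1) x * ∏ i ∈ Finset.range (r+1), (((k+1:ℕ):ℝ) - i)
          = (N:ℝ) * x * (bask (N+1) k x * ∏ i ∈ Finset.range r, ((k:ℝ) - i)) := by
        intro k
        rw [Finset.prod_range_succ' (fun i => (((k+1:ℕ):ℝ) - i)) r]
        push_cast
        have : ∀ i ∈ Finset.range r, ((k:ℝ) + 1 - ((i:ℝ) + 1)) = ((k:ℝ) - i) := by
          intro i _; ring
        rw [Finset.prod_congr rfl this, sub_zero]
        rw [show bask N (k+1) x * ((∏ i ∈ Finset.range r, ((k:ℝ) - i)) * ((k:ℝ)+1))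
            = (bask N (k+1) x * ((k:ℝ)+1)) * ∏ i ∈ Finset.range r, ((k:ℝ) - i) from by ring]
        rw [bask_mul_succ]
        ring
      have h2 : HasSum (fun k => bask N (k+1) x * ∏ i ∈ Finset.range (r+1), (((k+1:ℕ):ℝ) - i))
          ((N:ℝ) * x * ((∏ i ∈ Finset.range r, (((N:ℕ):ℝ) + 1 + i)) * x ^ r)) := by
        rw [funext hshift]
        convert IH using 2
        rfl
        push_cast
        ring
      have h3 : HasSum (fun k => bask N k x * ∏ i ∈ Finset.range (r+1), ((k:ℝ) - i))
          ((N:ℝ) * x * ((∏ i ∈ Finset.range r, ((N:ℝ) + 1 + i)) * x ^ r)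
            + ∑ i ∈ Finset.range 1, bask N i x * ∏ j ∈ Finset.range (r+1), ((i:ℝ) - j)) :=
        (hasSum_nat_add_iff 1).mp h2
      · convert h3 using 1
        have h0 : (∏ j ∈ Finset.range (r+1), (((0:ℕ):ℝ) - (j:ℝ))) = 0 :=
          Finset.prod_eq_zero (Finset.mem_range.mpr (Nat.succ_pos r)) (by simp)
        rw [Finset.range_one, Finset.sum_singleton, h0, mul_zero, add_zero]
        rw [Finset.prod_range_succ' (fun i => ((N:ℝ) + i)) r]
        push_cast
        have hcg : ∀ i ∈ Finset.range r, ((N:ℝ) + ((i:ℝ) + 1)) = ((N:ℝ) + 1 + i) := by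
          intro i _; ring
        rw [Finset.prod_congr rfl hcg]
        ring

lemma hasSum_bask_poly (N : ℕ) (hN : 1 ≤ N) (x : ℝ) (hx : 0 ≤ x) (a0 a1 a2 a3 a4 : ℝ) :
    HasSum (fun k : ℕ => bask N k x *
      (a0 + a1 * k + a2 * ((k:ℝ) * ((k:ℝ) - 1)) + a3 * ((k:ℝ) * ((k:ℝ)-1) * ((k:ℝ)-2))
        + a4 * ((k:ℝ) * ((k:ℝ)-1) * ((k:ℝ)-2) * ((k:ℝ)-3))))
      (a0 + a1 * ((N:ℝ) * x) + a2 * ((N:ℝ)*((N:ℝ)+1)) * x^2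
        + a3 * ((N:ℝ)*((N:ℝ)+1)*((N:ℝ)+2)) * x^3
        + a4 * ((N:ℝ)*((N:ℝ)+1)*((N:ℝ)+2)*((N:ℝ)+3)) * x^4) := by
  have h0 := hasSum_bask_fall 0 N hN x hx
  have h1 := hasSum_bask_fall 1 N hN x hx
  have h2 := hasSum_bask_fall 2 N hN x hx
  have h3 := hasSum_bask_fall 3 N hN x hx
  have h4 := hasSum_bask_fall 4 N hN x hx
  simp only [Finset.prod_range_succ, Finset.prod_range_zero, Finset.prod_range_one,
    Nat.cast_zero, Nat.cast_one, Nat.cast_ofNat, one_mul, sub_zero, pow_zero, pow_one,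
    mul_one] at h0 h1 h2 h3 h4
  have hc := ((((h0.mul_left a0).add (h1.mul_left a1)).add (h2.mul_left a2)).add
    (h3.mul_left a3)).add (h4.mul_left a4)
  convert hc using 1
  · rfl
  · funext k
    push_cast
    ring
  · push_cast
    ring


set_option maxHeartbeats 4000000 in
theorem V2_central_moment_four (n : ℕ) (hn : 6 ≤ n) (x : ℝ) (hx : 0 ≤ x) :
    V2 n (fun t => (t - x) ^ 4) x =
      (1 / (((n : ℝ) - 2) * ((n : ℝ) - 3) * ((n : ℝ) - 4) * ((n : ℝ) - 5))) *
        ((n : ℝ) ^ 2 * (-12 * x ^ 2 - 24 * x ^ 3 - 12 * x ^ 4)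
          + (n : ℝ) * (-156 * x - 816 * x ^ 2 - 1320 * x ^ 3 - 660 * x ^ 4)
          - 144 - 1284 * x - 4068 * x ^ 2 - 5568 * x ^ 3 - 2784 * x ^ 4) := by
  obtain ⟨p, rfl⟩ : ∃ p, n = p + 6 := ⟨n - 6, by omega⟩
  have h1 : ((p:ℝ)+1) ≠ 0 := by positivity
  have h2 : ((p:ℝ)+2) ≠ 0 := by positivity
  have h3 : ((p:ℝ)+3) ≠ 0 := by positivity
  have h4 : ((p:ℝ)+4) ≠ 0 := by positivity
  have h5 : ((p:ℝ)+5) ≠ 0 := by positivity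
  set DD : ℝ := ((p:ℝ)+1)*((p:ℝ)+2)*((p:ℝ)+3)*((p:ℝ)+4)*((p:ℝ)+5) with hDDdef
  have hDD : DD ≠ 0 := by positivity
  set Ifun : ℕ → ℝ := fun k =>
      x^4/((p:ℝ)+5) - 4*x^3*((k:ℝ)+1)/(((p:ℝ)+5)*((p:ℝ)+4))
      + 6*x^2*(((k:ℝ)+1)*((k:ℝ)+2))/(((p:ℝ)+5)*((p:ℝ)+4)*((p:ℝ)+3))
      - 4*x*(((k:ℝ)+1)*((k:ℝ)+2)*((k:ℝ)+3))/(((p:ℝ)+5)*((p:ℝ)+4)*((p:ℝ)+3)*((p:ℝ)+2))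
      + (((k:ℝ)+1)*((k:ℝ)+2)*((k:ℝ)+3)*((k:ℝ)+4))
          /(((p:ℝ)+5)*((p:ℝ)+4)*((p:ℝ)+3)*((p:ℝ)+2)*((p:ℝ)+1)) with hIfun
  have H0 := hasSum_bask_poly (p+8) (by omega) x hx (24 + -24 * x + 24 * x ^ 2 + -24 * x ^ 3 + 24 * x ^ 4 + -24 * (p:ℝ) * x + 36 * (p:ℝ) * x ^ 2 + -44 * (p:ℝ) * x ^ 3 + 50 * (p:ℝ) * x ^ 4 + 12 * (p:ℝ) ^ 2 * x ^ 2 + -24 * (p:ℝ) ^ 2 * x ^ 3 + 35 * (p:ℝ) ^ 2 * x ^ 4 + -4 * (p:ℝ) ^ 3 * x ^ 3 + 10 * (p:ℝ) ^ 3 * x ^ 4 + (p:ℝ) ^ 4 * x ^ 4) (96 + -72 * x + 48 * x ^ 2 + -24 * x ^ 3 + -72 * (p:ℝ) * x + 72 * (p:ℝ) * x ^ 2 + -44 * (p:ℝ) * x ^ 3 + 24 * (p:ℝ) ^ 2 * x ^ 2 + -24 * (p:ℝ) ^ 2 * x ^ 3 + -4 * (p:ℝ) ^ 3 * x ^ 3)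 (72 + -36 * x + 12 * x ^ 2 + -36 * (p:ℝ) * x + 18 * (p:ℝ) * x ^ 2 + 6 * (p:ℝ) ^ 2 * x ^ 2) (16 + -4 * x + -4 * (p:ℝ) * x) (1)
  have H1 := hasSum_bask_poly (p+8) (by omega) x hx (120 + -96 * x + 72 * x ^ 2 + -48 * x ^ 3 + 24 * x ^ 4 + -96 * (p:ℝ) * x + 108 * (p:ℝ) * x ^ 2 + -88 * (p:ℝ) * x ^ 3 + 50 * (p:ℝ) * x ^ 4 + 36 * (p:ℝ) ^ 2 * x ^ 2 + -48 * (p:ℝ) ^ 2 * x ^ 3 + 35 * (p:ℝ) ^ 2 * x ^ 4 + -8 * (p:ℝ) ^ 3 * x ^ 3 + 10 * (p:ℝ) ^ 3 * x ^ 4 + (p:ℝ) ^ 4 * x ^ 4) (240 + -144 * x + 72 * x ^ 2 + -24 * x ^ 3 + -144 * (p:ℝ) * x + 108 * (p:ℝ) * x ^ 2 + -44 * (p:ℝ) * x ^ 3 + 36 * (p:ℝ) ^ 2 * x ^ 2 + -24 * (p:ℝ) ^ 2 * x ^ 3 + -4 * (p:ℝ) ^ 3 * x ^ 3) (120 + -48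 * x + 12 * x ^ 2 + -48 * (p:ℝ) * x + 18 * (p:ℝ) * x ^ 2 + 6 * (p:ℝ) ^ 2 * x ^ 2) (20 + -4 * x + -4 * (p:ℝ) * x) (1)
  have H2 := hasSum_bask_poly (p+8) (by omega) x hx (360 + -240 * x + 144 * x ^ 2 + -72 * x ^ 3 + 24 * x ^ 4 + -240 * (p:ℝ) * x + 216 * (p:ℝ) * x ^ 2 + -132 * (p:ℝ) * x ^ 3 + 50 * (p:ℝ) * x ^ 4 + 72 * (p:ℝ) ^ 2 * x ^ 2 + -72 * (p:ℝ) ^ 2 * x ^ 3 + 35 * (p:ℝ) ^ 2 * x ^ 4 + -12 * (p:ℝ) ^ 3 * x ^ 3 + 10 * (p:ℝ) ^ 3 * x ^ 4 + (p:ℝ) ^ 4 * x ^ 4) (480 + -240 * x + 96 * x ^ 2 + -24 * x ^ 3 + -240 * (p:ℝ) * x + 144 * (p:ℝ) * x ^ 2 + -44 * (p:ℝ) * x ^ 3 + 48 * (p:ℝ) ^ 2 * x ^ 2 + -24 * (p:ℝ) ^ 2 * x ^ 3 + -4 * (p:ℝ) ^ 3 * x ^ 3) (180 + -60 * x + 12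 * x ^ 2 + -60 * (p:ℝ) * x + 18 * (p:ℝ) * x ^ 2 + 6 * (p:ℝ) ^ 2 * x ^ 2) (24 + -4 * x + -4 * (p:ℝ) * x) (1)
  have G0 : HasSum (fun k : ℕ => bask (p+8) k x * (DD * Ifun k))
      ((24 + -24 * x + 24 * x ^ 2 + -24 * x ^ 3 + 24 * x ^ 4 + -24 * (p:ℝ) * x + 36 * (p:ℝ) * x ^ 2 + -44 * (p:ℝ) * x ^ 3 + 50 * (p:ℝ) * x ^ 4 + 12 * (p:ℝ) ^ 2 * x ^ 2 + -24 * (p:ℝ) ^ 2 * x ^ 3 + 35 * (p:ℝ) ^ 2 * x ^ 4 + -4 * (p:ℝ) ^ 3 * x ^ 3 + 10 * (p:ℝ) ^ 3 * x ^ 4 + (p:ℝ) ^ 4 * x ^ 4) + (96 + -72 * x + 48 * x ^ 2 + -24 * x ^ 3 + -72 * (p:ℝ) * x + 72 * (p:ℝ) * x ^ 2 + -44 * (p:ℝ) * x ^ 3 + 24 * (p:ℝ) ^ 2 * x ^ 2 + -24 * (p:ℝ) ^ 2 * x ^ 3 + -4 * (p:ℝ) ^ 3 * x ^ 3) * (((p+8:ℕ):ℝ)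 * x)
        + (72 + -36 * x + 12 * x ^ 2 + -36 * (p:ℝ) * x + 18 * (p:ℝ) * x ^ 2 + 6 * (p:ℝ) ^ 2 * x ^ 2) * (((p+8:ℕ):ℝ)*(((p+8:ℕ):ℝ)+1)) * x^2
        + (16 + -4 * x + -4 * (p:ℝ) * x) * (((p+8:ℕ):ℝ)*(((p+8:ℕ):ℝ)+1)*(((p+8:ℕ):ℝ)+2)) * x^3
        + (1) * (((p+8:ℕ):ℝ)*(((p+8:ℕ):ℝ)+1)*(((p+8:ℕ):ℝ)+2)*(((p+8:ℕ):ℝ)+3)) * x^4) := by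
    convert H0 using 1
    funext k
    rw [hIfun, hDDdef]
    congr 1
    field_simp
    ring
  have G1 : HasSum (fun k : ℕ => bask (p+8) k x * (DD * Ifun (k+1)))
      ((120 + -96 * x + 72 * x ^ 2 + -48 * x ^ 3 + 24 * x ^ 4 + -96 * (p:ℝ) * x + 108 * (p:ℝ) * x ^ 2 + -88 * (p:ℝ) * x ^ 3 + 50 * (p:ℝ) * x ^ 4 + 36 * (p:ℝ) ^ 2 * x ^ 2 + -48 * (p:ℝ) ^ 2 * x ^ 3 + 35 * (p:ℝ) ^ 2 * x ^ 4 + -8 * (p:ℝ) ^ 3 * x ^ 3 + 10 * (p:ℝ) ^ 3 * x ^ 4 + (p:ℝ) ^ 4 * x ^ 4) + (240 + -144 * x + 72 * x ^ 2 + -24 * x ^ 3 + -144 * (p:ℝ) * x + 108 * (p:ℝ) * x ^ 2 + -44 * (p:ℝ) * x ^ 3 + 36 * (p:ℝ) ^ 2 * x ^ 2 + -24 * (p:ℝ) ^ 2 * x ^ 3 + -4 * (p:ℝ) ^ 3 * x ^ 3) * (((p+8:ℕ):ℝ) * x)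
        + (120 + -48 * x + 12 * x ^ 2 + -48 * (p:ℝ) * x + 18 * (p:ℝ) * x ^ 2 + 6 * (p:ℝ) ^ 2 * x ^ 2) * (((p+8:ℕ):ℝ)*(((p+8:ℕ):ℝ)+1)) * x^2
        + (20 + -4 * x + -4 * (p:ℝ) * x) * (((p+8:ℕ):ℝ)*(((p+8:ℕ):ℝ)+1)*(((p+8:ℕ):ℝ)+2)) * x^3
        + (1) * (((p+8:ℕ):ℝ)*(((p+8:ℕ):ℝ)+1)*(((p+8:ℕ):ℝ)+2)*(((p+8:ℕ):ℝ)+3)) * x^4) := by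
    convert H1 using 1
    funext k
    rw [hIfun, hDDdef]
    congr 1
    push_cast
    field_simp
    try ring
  have G2 : HasSum (fun k : ℕ => bask (p+8) k x * (DD * Ifun (k+2)))
      ((360 + -240 * x + 144 * x ^ 2 + -72 * x ^ 3 + 24 * x ^ 4 + -240 * (p:ℝ) * x + 216 * (p:ℝ) * x ^ 2 + -132 * (p:ℝ) * x ^ 3 + 50 * (p:ℝ) * x ^ 4 + 72 * (p:ℝ) ^ 2 * x ^ 2 + -72 * (p:ℝ) ^ 2 * x ^ 3 + 35 * (p:ℝ) ^ 2 * x ^ 4 + -12 * (p:ℝ) ^ 3 * x ^ 3 + 10 * (p:ℝ) ^ 3 * x ^ 4 + (p:ℝ) ^ 4 * x ^ 4) + (480 + -240 * x + 96 * x ^ 2 + -24 * x ^ 3 + -240 * (p:ℝ) * x + 144 * (p:ℝ) * x ^ 2 + -44 * (p:ℝ) * x ^ 3 + 48 * (p:ℝ) ^ 2 * x ^ 2 + -24 * (p:ℝ) ^ 2 * x ^ 3 + -4 * (p:ℝ) ^ 3 * x ^ 3) * (((p+8:ℕ):ℝ) * x)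
        + (180 + -60 * x + 12 * x ^ 2 + -60 * (p:ℝ) * x + 18 * (p:ℝ) * x ^ 2 + 6 * (p:ℝ) ^ 2 * x ^ 2) * (((p+8:ℕ):ℝ)*(((p+8:ℕ):ℝ)+1)) * x^2
        + (24 + -4 * x + -4 * (p:ℝ) * x) * (((p+8:ℕ):ℝ)*(((p+8:ℕ):ℝ)+1)*(((p+8:ℕ):ℝ)+2)) * x^3
        + (1) * (((p+8:ℕ):ℝ)*(((p+8:ℕ):ℝ)+1)*(((p+8:ℕ):ℝ)+2)*(((p+8:ℕ):ℝ)+3)) * x^4) := by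
    convert H2 using 1
    funext k
    rw [hIfun, hDDdef]
    congr 1
    push_cast
    field_simp
    try ring
  -- shifted versions
  have S1 : HasSum (fun k : ℕ => (if k = 0 then (0:ℝ) else bask (p+8) (k-1) x) * (DD * Ifun k))
      (_ + ∑ i ∈ Finset.range 1, (if i = 0 then (0:ℝ) else bask (p+8) (i-1) x) * (DD * Ifun i)) :=
    (hasSum_nat_add_iff 1).mp (by convert G1 using 1 <;> rfl)
  simp only [Finset.range_one, Finset.sum_singleton, eq_self_iff_true, if_true, zero_mul,
    add_zero] at S1
  have S2 : HasSum (fun k : ℕ => (if k < 2 then (0:ℝ) else bask (p+8) (k-2) x) * (DD * Ifun k))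
      (_ + ∑ i ∈ Finset.range 2, (if i < 2 then (0:ℝ) else bask (p+8) (i-2) x) * (DD * Ifun i)) :=
    (hasSum_nat_add_iff 2).mp (by convert G2 using 1 <;> rfl)
  simp only [Finset.sum_range_succ, Finset.sum_range_zero, if_pos (by norm_num : (0:ℕ) < 2),
    if_pos (by norm_num : (1:ℕ) < 2), zero_mul, add_zero, zero_add, if_true] at S2
  set α : ℝ := 3 / 2 + 2 * x - ((p:ℝ)+6) * x * (1 + x) with hα
  set β : ℝ := 2 * ((p:ℝ)+6) * x * (1 + x) with hβ
  set γ : ℝ := -(1 / 2) - 2 * x - ((p:ℝ)+6) * x * (1 + x) with hγ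
  have comb := ((G0.mul_left α).add (S1.mul_left β)).add (S2.mul_left γ)
  have hfun2 : (fun k : ℕ => α * (bask (p+8) k x * (DD * Ifun k))
        + β * ((if k = 0 then (0:ℝ) else bask (p+8) (k-1) x) * (DD * Ifun k))
        + γ * ((if k < 2 then (0:ℝ) else bask (p+8) (k-2) x) * (DD * Ifun k)))
      = fun k : ℕ => (p2 (p+6) k x * Ifun k) * DD := by
    funext k
    simp only [p2, show p+6+2 = p+8 from by omega, hα, hβ, hγ]
    push_cast
    ring
  have comb2 := hfun2 ▸ comb
  have comb3 := comb2.div_const DD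
  have hfun3 : (fun k : ℕ => ((p2 (p+6) k x * Ifun k) * DD) / DD)
      = fun k : ℕ => p2 (p+6) k x * Ifun k := by
    funext k
    rw [mul_div_cancel_right₀ _ hDD]
  have final := hfun3 ▸ comb3
  simp only [V2]
  have hint : (fun k : ℕ => p2 (p+6) k x * ∫ t in Set.Ioi (0:ℝ), bask (p+6) k t * (t-x)^4)
      = fun k : ℕ => p2 (p+6) k x * Ifun k := by
    funext k
    rw [bask_integral p k x, hIfun]
  rw [hint, final.tsum_eq]
  rw [hDDdef, hα, hβ, hγ]
  push_cast
  have hd1 : ((p:ℝ)+6) - 2 ≠ 0 := by intro h; apply h4; linarith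
  have hd2 : ((p:ℝ)+6) - 3 ≠ 0 := by intro h; apply h3; linarith
  have hd3 : ((p:ℝ)+6) - 4 ≠ 0 := by intro h; apply h2; linarith
  have hd4 : ((p:ℝ)+6) - 5 ≠ 0 := by intro h; apply h1; linarith
  field_simp
  ring
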